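/- Let n, k, l, r, t, s, p, q be integers with k, r ≥ 2, n ≥ l ≥ t+1, n = p(l-1)+q with 0 ≤ q < l-1, where t is the largest integer with C(t-1,r-1) ≤ k and s is the largest integer with k + C(s,r) ≤ k·s, and suppose l-1 > s and q ≤ s. If H is a (k,l)-edge-maximal r-uniform hypergraph on n vertices, then |E(H)| ≤ p·C(l-1,r) + (p-1+q)·k. -/

import Mathlib

/-- The set of edges of `E` crossing the cut `(X, S \ X)` inside ground set `S`. -/
def cutEdges {V : Type*} [DecidableEq V] (E : Finset (Finset V)) (S X : Finset V) :
    Finset (Finset V) :=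
  E.filter fun e => (e ∩ X).Nonempty ∧ (e ∩ (S \ X)).Nonempty

/-- `E` is the edge set of a `(k,l)`-edge-maximal `r`-uniform hypergraph on vertex set `W`:
every subhypergraph on at least `l` vertices has edge-connectivity at most `k`, and
adding any missing `r`-subset of `W` creates a subhypergraph on at least `l` vertices
with edge-connectivity at least `k + 1`. -/
def IsKLEdgeMaximal {V : Type*} [DecidableEq V] (r k l : ℕ) (W : Finset V)
    (E : Finset (Finset V)) : Prop :=
  (∀ e ∈ E, e.card = r ∧ e ⊆ W) ∧
  (∀ S ⊆ W, ∀ E' ⊆ E, (∀ e ∈ E', e ⊆ S) → l ≤ S.card →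
    ∃ X ⊆ S, X.Nonempty ∧ (S \ X).Nonempty ∧ (cutEdges E' S X).card ≤ k) ∧
  (∀ e : Finset V, e ⊆ W → e.card = r → e ∉ E →
    ∃ S ⊆ W, ∃ E' ⊆ insert e E, (∀ f ∈ E', f ⊆ S) ∧ l ≤ S.card ∧
      ∀ X ⊆ S, X.Nonempty → (S \ X).Nonempty → k + 1 ≤ (cutEdges E' S X).card)


lemma listSumAdd (f g : ℕ → ℤ) (M : List ℕ) :
    (M.map fun m => f m + g m).sum = (M.map f).sum + (M.map g).sum := by
  induction M with
  | nil => simp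
  | cons a t ih => simp only [List.map_cons, List.sum_cons, ih]; ring

lemma listSumCast (f : ℕ → ℕ) (M : List ℕ) :
    ((M.map f).sum : ℤ) = (M.map fun m => (f m : ℤ)).sum := by
  induction M with
  | nil => simp
  | cons a t ih => simp only [List.map_cons, List.sum_cons]; push_cast [ih]; ring

lemma listSumLe (f g : ℕ → ℤ) (M : List ℕ) (h : ∀ m ∈ M, f m ≤ g m) :
    (M.map f).sum ≤ (M.map g).sum := by
  induction M with
  | nil => simp
  | cons a t ih =>
    simp only [List.map_cons, List.sum_cons]
    exact add_le_add (h a (by simp)) (ih fun m hm => h m (by simp [hm]))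

lemma listSumMulLeft (c : ℤ) (f : ℕ → ℤ) (M : List ℕ) :
    (M.map fun m => c * f m).sum = c * (M.map f).sum := by
  induction M with
  | nil => simp
  | cons a t ih => simp only [List.map_cons, List.sum_cons, ih]; ring

lemma listSumMulRight (c : ℤ) (f : ℕ → ℤ) (M : List ℕ) :
    (M.map fun m => f m * c).sum = (M.map f).sum * c := by
  induction M with
  | nil => simp
  | cons a t ih => simp only [List.map_cons, List.sum_cons, ih]; ring

lemma listFilterDropNonpos (f : ℕ → ℤ) (P : ℕ → Bool) (M : List ℕ)
    (h : ∀ m ∈ M, P m = false → f m ≤ 0) :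
    (M.map f).sum ≤ ((M.filter P).map f).sum := by
  induction M with
  | nil => simp
  | cons a t ih =>
    have ih' := ih fun m hm => h m (by simp [hm])
    cases hpa : P a with
    | true =>
      simp only [List.filter_cons, hpa, if_true, List.map_cons, List.sum_cons]
      linarith
    | false =>
      simp only [List.filter_cons, hpa, if_false, List.map_cons, List.sum_cons]
      have := h a (by simp) hpa
      simp only [Bool.false_eq_true, if_false]
      linarith

lemma listFilterSumLe (f : ℕ → ℤ) (P : ℕ → Bool) (M : List ℕ)
    (h : ∀ m ∈ M, 0 ≤ f m) :
    ((M.filter P).map f).sum ≤ (M.map f).sum := by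
  induction M with
  | nil => simp
  | cons a t ih =>
    have ih' := ih fun m hm => h m (by simp [hm])
    cases hpa : P a with
    | true =>
      simp only [List.filter_cons, hpa, if_true, List.map_cons, List.sum_cons]
      linarith
    | false =>
      simp only [List.filter_cons, hpa, List.map_cons, List.sum_cons,
        Bool.false_eq_true, if_false]
      have := h a (by simp)
      linarith

lemma listSumSubConst (c : ℤ) (f : ℕ → ℤ) (M : List ℕ) :
    (M.map fun m => f m - c).sum = (M.map f).sum - M.length * c := by
  induction M with
  | nil => simp
  | cons a t ih => simp only [List.map_cons, List.sum_cons, List.length_cons, ih]; push_cast; ring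

lemma listSumLeConst (c : ℤ) (f : ℕ → ℤ) (M : List ℕ) (h : ∀ m ∈ M, f m ≤ c) :
    (M.map f).sum ≤ M.length * c := by
  induction M with
  | nil => simp
  | cons a t ih =>
    have ih' := ih fun m hm => h m (by simp [hm])
    simp only [List.map_cons, List.sum_cons, List.length_cons]
    have := h a (by simp)
    push_cast
    linarith

/-- Discrete chord inequality for a function with nondecreasing differences. -/
lemma chordIneq (f : ℕ → ℤ)
    (hconv : ∀ x, f (x + 1) - f x ≤ f (x + 2) - f (x + 1))
    (a m b : ℕ) (ham : a ≤ m) (hmb : m ≤ b) :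
    ((b : ℤ) - a) * f m ≤ ((b : ℤ) - m) * f a + ((m : ℤ) - a) * f b := by
  set g : ℕ → ℤ := fun x => f (x + 1) - f x with hg
  have hgmono : Monotone g := monotone_nat_of_le_succ fun x => by
    have := hconv x
    simp only [hg]
    rw [show x + 1 + 1 = x + 2 from rfl]
    omega
  -- f (a + d) - f a ≤ d * g (a + d)
  have L1 : ∀ d a' : ℕ, f (a' + d) - f a' ≤ (d : ℤ) * g (a' + d) := by
    intro d
    induction d with
    | zero => intro a'; simp
    | succ d ih =>
      intro a'
      have h1 := ih a'
      have h2 : g (a' + d) ≤ g (a' + d + 1) := hgmono (Nat.le_succ _)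
      have h3 : f (a' + d + 1) - f (a' + d) = g (a' + d) := by simp [hg]
      have : (a' + (d + 1)) = (a' + d + 1) := by omega
      rw [this]
      push_cast
      nlinarith [h1, h2]
  -- (e : ℤ) * g m' ≤ f (m' + e) - f m'
  have L2 : ∀ e m' : ℕ, (e : ℤ) * g m' ≤ f (m' + e) - f m' := by
    intro e
    induction e with
    | zero => intro m'; simp
    | succ e ih =>
      intro m'
      have h1 := ih m'
      have h2 : g m' ≤ g (m' + e) := hgmono (Nat.le_add_right _ _)
      have h3 : f (m' + e + 1) - f (m' + e) = g (m' + e) := by simp [hg]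
      have : (m' + (e + 1)) = (m' + e + 1) := by omega
      rw [this]
      push_cast
      nlinarith [h1, h2]
  have h1 := L1 (m - a) a
  have h2 := L2 (b - m) m
  rw [Nat.add_sub_cancel' ham] at h1
  rw [Nat.add_sub_cancel' hmb] at h2
  have hma : ((m - a : ℕ) : ℤ) = (m : ℤ) - a := by omega
  have hbm : ((b - m : ℕ) : ℤ) = (b : ℤ) - m := by omega
  rw [hma] at h1
  rw [hbm] at h2
  have hbm0 : (0 : ℤ) ≤ (b : ℤ) - m := by omega
  have hma0 : (0 : ℤ) ≤ (m : ℤ) - a := by omega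
  nlinarith [mul_le_mul_of_nonneg_left h1 hbm0, mul_le_mul_of_nonneg_left h2 hma0]
/-- Arithmetic optimization lemma: any partition of `n` into parts in `[1, L]`
    has weight at most that of `p` parts of size `L` plus `q` singletons. -/
lemma lemB (k r L s p q n : ℕ) (hk : 2 ≤ k) (hr : 2 ≤ r)
    (hs1 : k + s.choose r ≤ k * s)
    (hW : k * L + 1 ≤ k + L.choose r)
    (hls : s < L) (hqs : q ≤ s)
    (hnpq : n = p * L + q)
    (M : List ℕ) (hM : ∀ m ∈ M, 1 ≤ m ∧ m ≤ L) (hsum : M.sum = n) :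
    (M.map fun m => m.choose r + k).sum ≤ p * L.choose r + (p + q) * k := by
  have hs0 : 1 ≤ s := by
    by_contra h
    have : s = 0 := by omega
    subst this
    simp at hs1
    omega
  set ψ : ℕ → ℤ := fun m => (m.choose r : ℤ) + k - k * m with hψ
  -- convexity of ψ
  obtain ⟨r', hr'⟩ : ∃ r', r = r' + 1 := ⟨r - 1, by omega⟩
  have hconv : ∀ x, ψ (x + 1) - ψ x ≤ ψ (x + 2) - ψ (x + 1) := by
    intro x
    have c1 : (x + 1).choose r = x.choose r' + x.choose r := by
      rw [hr']; exact Nat.choose_succ_succ x r'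
    have c2 : (x + 2).choose r = (x+1).choose r' + (x+1).choose r := by
      rw [hr']; exact Nat.choose_succ_succ (x+1) r'
    have c3 : x.choose r' ≤ (x+1).choose r' := Nat.choose_le_choose r' (Nat.le_succ x)
    simp only [hψ]
    push_cast [c1, c2]
    push_cast at c3
    linarith
  set W : ℤ := ψ L with hWdef
  have hW1 : 1 ≤ W := by
    simp only [hWdef, hψ]
    push_cast at hW ⊢
    linarith
  have hψ1 : ψ 1 = 0 := by
    simp only [hψ]
    rw [Nat.choose_eq_zero_of_lt (by omega)]
    push_cast; ring
  have hψs : ψ s ≤ 0 := by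
    simp only [hψ]
    push_cast at hs1 ⊢
    linarith
  -- ψ nonpositive on [1, s]
  have hψle0 : ∀ m, 1 ≤ m → m ≤ s → ψ m ≤ 0 := by
    intro m h1 h2
    have hc := chordIneq ψ hconv 1 m s h1 h2
    rw [hψ1] at hc
    push_cast at hc
    rcases Nat.lt_or_ge m s with h | h
    · have hpos : (0:ℤ) < (s:ℤ) - 1 := by omega
      have hm1 : (0:ℤ) ≤ (m:ℤ) - 1 := by omega
      have hrhs : ((m:ℤ) - 1) * ψ s ≤ 0 := mul_nonpos_of_nonneg_of_nonpos hm1 hψs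
      have hle : ((s:ℤ) - 1) * ψ m ≤ ((s:ℤ) - 1) * 0 := by linarith
      have := (mul_le_mul_iff_right₀ hpos).mp hle
      linarith
    · have : m = s := by omega
      rw [this]; exact hψs
  -- chord bound on [s, L]
  have hψub : ∀ m, s ≤ m → m ≤ L → ((L : ℤ) - s) * ψ m ≤ ((m : ℤ) - s) * W := by
    intro m h1 h2
    have hc := chordIneq ψ hconv s m L h1 h2
    have hLm : (0:ℤ) ≤ (L:ℤ) - m := by omega
    nlinarith [mul_nonneg hLm (neg_nonneg.mpr hψs)]
  -- main sum bound
  set A : List ℕ := M.filter (fun m => decide (s < m)) with hA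
  have hAmem : ∀ m ∈ A, s < m ∧ m ≤ L := by
    intro m hm
    rw [hA, List.mem_filter] at hm
    exact ⟨by simpa using hm.2, (hM m hm.1).2⟩
  have step1 : (M.map ψ).sum ≤ (A.map ψ).sum := by
    apply listFilterDropNonpos
    intro m hm hPm
    have hms : m ≤ s := by simpa using hPm
    exact hψle0 m (hM m hm).1 hms
  set D : ℤ := (L : ℤ) - s with hD
  have hD1 : 1 ≤ D := by simp only [hD]; omega
  have step2 : D * (A.map ψ).sum ≤ (A.map fun m : ℕ => (m : ℤ) - s).sum * W := by
    have e1 : (A.map fun m => D * ψ m).sum = D * (A.map ψ).sum := listSumMulLeft D ψ A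
    have e2 : (A.map fun m : ℕ => ((m:ℤ) - s) * W).sum
        = (A.map fun m : ℕ => ((m:ℤ) - s)).sum * W := listSumMulRight W (fun m : ℕ => ((m:ℤ) - s)) A
    rw [← e1, ← e2]
    apply listSumLe
    intro m hm
    obtain ⟨h1, h2⟩ := hAmem m hm
    exact hψub m (le_of_lt h1) h2
  have step3 : (A.map fun m : ℕ => (m : ℤ) - s).sum ≤ p * D := by
    have hsub : (A.map fun m : ℕ => (m : ℤ) - s).sum
        = (A.map fun m : ℕ => (m : ℤ)).sum - A.length * s := by
      exact listSumSubConst s (fun m : ℕ => (m : ℤ)) A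
    rcases le_or_gt A.length p with hap | hap
    · have := listSumLeConst D (fun m : ℕ => (m : ℤ) - s) A (by
        intro m hm
        have := (hAmem m hm).2
        simp only [hD]
        omega)
      have hcast : (A.length : ℤ) ≤ p := by exact_mod_cast hap
      nlinarith [this]
    · -- A.length ≥ p + 1
      have hTn : (A.map fun m : ℕ => (m : ℤ)).sum ≤ (n : ℤ) := by
        have h1 : (A.map fun m : ℕ => (m : ℤ)).sum ≤ (M.map fun m : ℕ => (m : ℤ)).sum := by
          apply listFilterSumLe
          intro m hm
          exact_mod_cast Nat.zero_le m
        have h2 : (M.map fun m : ℕ => (m : ℤ)).sum = (n : ℤ) := by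
          have := listSumCast id M
          simp only [id_eq] at this
          rw [← this, List.map_id, hsum]
        rw [h2] at h1
        exact h1
      rw [hsub]
      have hal : (p : ℤ) + 1 ≤ A.length := by exact_mod_cast hap
      have hn' : (n : ℤ) = p * L + q := by exact_mod_cast hnpq
      have hq' : (q : ℤ) ≤ s := by exact_mod_cast hqs
      have hs' : (0 : ℤ) ≤ s := by positivity
      simp only [hD]
      have hmul : ((p : ℤ) + 1) * s ≤ (A.length : ℤ) * s :=
        mul_le_mul_of_nonneg_right hal hs'
      linarith [hTn, hmul]
  -- combine
  have key : (M.map ψ).sum ≤ p * W := by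
    have h1 : D * (M.map ψ).sum ≤ D * (A.map ψ).sum :=
      mul_le_mul_of_nonneg_left step1 (by omega)
    have h2 : (A.map fun m : ℕ => (m : ℤ) - s).sum * W ≤ (p * D) * W :=
      mul_le_mul_of_nonneg_right step3 (by omega)
    have h3 : D * (M.map ψ).sum ≤ D * ((p : ℤ) * W) := by
      have h12 : D * (M.map ψ).sum ≤ ((p : ℤ) * D) * W := le_trans h1 (le_trans step2 h2)
      have he : ((p : ℤ) * D) * W = D * ((p : ℤ) * W) := by ring
      linarith
    exact le_of_mul_le_mul_left h3 (by omega)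
  -- translate back
  have hfinal : ((M.map fun m => m.choose r + k).sum : ℤ)
      ≤ (p : ℤ) * L.choose r + ((p : ℤ) + q) * k := by
    have hdecomp : ((M.map fun m => m.choose r + k).sum : ℤ)
        = (M.map ψ).sum + (k : ℤ) * n := by
      rw [listSumCast]
      have e1 : (M.map fun m => ((m.choose r + k : ℕ) : ℤ)).sum
          = (M.map fun m : ℕ => ψ m + (k : ℤ) * m).sum := by
        congr 1
        apply List.map_congr_left
        intro m _
        simp only [hψ]
        push_cast
        ring
      rw [e1, listSumAdd ψ (fun m : ℕ => (k : ℤ) * m) M,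
        listSumMulLeft (k : ℤ) (fun m : ℕ => (m : ℤ)) M]
      have e3 : (M.map fun m : ℕ => (m : ℤ)).sum = (n : ℤ) := by
        have := listSumCast id M
        simp only [id_eq] at this
        rw [← this, List.map_id, hsum]
      rw [e3]
    rw [hdecomp]
    have hn' : (n : ℤ) = p * L + q := by exact_mod_cast hnpq
    have : (p : ℤ) * W + k * n = (p : ℤ) * L.choose r + ((p : ℤ) + q) * k := by
      simp only [hWdef, hψ]
      rw [hn']
      ring
    linarith [key]
  exact_mod_cast hfinal
lemma lemA {n : ℕ} (r k l : ℕ)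
    (E : Finset (Finset (Fin n)))
    (hE : ∀ e ∈ E, e.card = r)
    (hcut : ∀ S : Finset (Fin n), ∀ E' ⊆ E, (∀ e ∈ E', e ⊆ S) → l ≤ S.card →
      ∃ X ⊆ S, X.Nonempty ∧ (S \ X).Nonempty ∧ (cutEdges E' S X).card ≤ k) :
    ∀ N (S : Finset (Fin n)) (E' : Finset (Finset (Fin n))), S.card ≤ N → E' ⊆ E →
      (∀ e ∈ E', e ⊆ S) → S.Nonempty →
      ∃ M : List ℕ, (∀ m ∈ M, 1 ≤ m ∧ m ≤ l - 1) ∧ M.sum = S.card ∧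
        E'.card + k ≤ (M.map fun m => m.choose r + k).sum := by
  intro N
  induction N with
  | zero =>
    intro S E' hSN _ _ hSne
    exact absurd (Finset.card_pos.mpr hSne) (by omega)
  | succ N ih =>
    intro S E' hSN hE'E hsub hSne
    by_cases hl : l ≤ S.card
    · obtain ⟨X, hXS, hXne, hYne, hcutk⟩ := hcut S E' hE'E hsub hl
      set Y := S \ X with hY
      set E₁ := E'.filter (fun e => e ⊆ X) with hE₁
      set E₂ := E'.filter (fun e => e ⊆ Y) with hE₂
      have hYS : Y ⊆ S := Finset.sdiff_subset
      have hXcard : X.card < S.card := by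
        apply Finset.card_lt_card
        rw [Finset.ssubset_iff_of_subset hXS]
        obtain ⟨y, hy⟩ := hYne
        rw [hY, Finset.mem_sdiff] at hy
        exact ⟨y, hy.1, hy.2⟩
      have hYcard : Y.card < S.card := by
        have h1 : Y.card = S.card - X.card := by rw [hY]; exact Finset.card_sdiff_of_subset hXS
        have h2 : 1 ≤ X.card := Finset.card_pos.mpr hXne
        have h3 : X.card ≤ S.card := Finset.card_le_card hXS
        omega
      obtain ⟨M₁, hM₁, hsum₁, hb₁⟩ := ih X E₁ (by omega)
        (fun e he => hE'E (Finset.mem_filter.mp he).1)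
        (fun e he => (Finset.mem_filter.mp he).2) hXne
      obtain ⟨M₂, hM₂, hsum₂, hb₂⟩ := ih Y E₂ (by omega)
        (fun e he => hE'E (Finset.mem_filter.mp he).1)
        (fun e he => (Finset.mem_filter.mp he).2) hYne
      refine ⟨M₁ ++ M₂, ?_, ?_, ?_⟩
      · intro m hm
        rcases List.mem_append.mp hm with h | h
        · exact hM₁ m h
        · exact hM₂ m h
      · rw [List.sum_append, hsum₁, hsum₂, hY, Finset.card_sdiff_of_subset hXS]
        have := Finset.card_le_card hXS
        omega
      · rw [List.map_append, List.sum_append]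
        have hcover : E' ⊆ E₁ ∪ E₂ ∪ cutEdges E' S X := by
          intro e he
          by_cases h1 : (e ∩ X).Nonempty
          · by_cases h2 : (e ∩ (S \ X)).Nonempty
            · exact Finset.mem_union_right _ (Finset.mem_filter.mpr ⟨he, h1, h2⟩)
            · have heX : e ⊆ X := by
                intro v hv
                have hvS : v ∈ S := hsub e he hv
                by_contra hvX
                exact h2 ⟨v, Finset.mem_inter.mpr ⟨hv, Finset.mem_sdiff.mpr ⟨hvS, hvX⟩⟩⟩
              exact Finset.mem_union_left _ (Finset.mem_union_left _
                (Finset.mem_filter.mpr ⟨he, heX⟩))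
          · have heY : e ⊆ Y := by
              intro v hv
              have hvS : v ∈ S := hsub e he hv
              rw [hY, Finset.mem_sdiff]
              refine ⟨hvS, fun hvX => h1 ⟨v, Finset.mem_inter.mpr ⟨hv, hvX⟩⟩⟩
            exact Finset.mem_union_left _ (Finset.mem_union_right _
              (Finset.mem_filter.mpr ⟨he, heY⟩))
        have hEcard : E'.card ≤ E₁.card + E₂.card + k := by
          calc E'.card ≤ (E₁ ∪ E₂ ∪ cutEdges E' S X).card := Finset.card_le_card hcover
            _ ≤ (E₁ ∪ E₂).card + (cutEdges E' S X).card := Finset.card_union_le _ _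
            _ ≤ E₁.card + E₂.card + (cutEdges E' S X).card := by
                have := Finset.card_union_le E₁ E₂
                omega
            _ ≤ E₁.card + E₂.card + k := by omega
        omega
    · refine ⟨[S.card], ?_, by simp, ?_⟩
      · intro m hm
        simp only [List.mem_singleton] at hm
        subst hm
        exact ⟨Finset.card_pos.mpr hSne, by omega⟩
      · simp only [List.map_cons, List.map_nil, List.sum_cons, List.sum_nil, add_zero]
        have : E'.card ≤ S.card.choose r := by
          calc E'.card ≤ (S.powersetCard r).card := by
                apply Finset.card_le_card
                intro e he
                exact Finset.mem_powersetCard.mpr ⟨hsub e he, hE e (hE'E he)⟩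
            _ = S.card.choose r := Finset.card_powersetCard r S
        omega
theorem stmt_17 (n k l r t s p q : ℕ) (hk : 2 ≤ k) (hr : 2 ≤ r)
    (ht1 : (t - 1).choose (r - 1) ≤ k) (ht2 : k < t.choose (r - 1))
    (hs1 : k + s.choose r ≤ k * s)
    (hs2 : ∀ m : ℕ, k + m.choose r ≤ k * m → m ≤ s)
    (hl : t + 1 ≤ l) (hln : l ≤ n)
    (hnpq : n = p * (l - 1) + q) (hq : q < l - 1)
    (hls : s < l - 1) (hqs : q ≤ s)
    (E : Finset (Finset (Fin n)))
    (hmax : IsKLEdgeMaximal r k l Finset.univ E) :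
    E.card ≤ p * (l - 1).choose r + (p - 1 + q) * k := by
  obtain ⟨h1, h2, _⟩ := hmax
  have hl2 : 2 ≤ l := by omega
  have hn2 : 2 ≤ n := by omega
  have hp1 : 1 ≤ p := by
    by_contra hp
    have : p = 0 := by omega
    subst this
    omega
  have hne : (Finset.univ : Finset (Fin n)).Nonempty :=
    ⟨⟨0, by omega⟩, Finset.mem_univ _⟩
  have hcard : (Finset.univ : Finset (Fin n)).card = n := by
    rw [Finset.card_univ, Fintype.card_fin]
  obtain ⟨M, hM, hsum, hb⟩ := lemA r k l E (fun e he => (h1 e he).1)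
    (fun S E' hE' hsub hl' => h2 S (Finset.subset_univ S) E' hE' hsub hl')
    n Finset.univ E (by omega) (le_refl E) (fun e he => Finset.subset_univ e) hne
  rw [hcard] at hsum
  have hWpos : k * (l - 1) + 1 ≤ k + (l - 1).choose r := by
    by_contra hcon
    have := hs2 (l - 1) (by omega)
    omega
  have hB := lemB k r (l - 1) s p q n hk hr hs1 hWpos hls hqs hnpq M hM hsum
  have hfin : E.card + k ≤ p * (l - 1).choose r + (p + q) * k := le_trans hb hB
  have hpq : p + q = (p - 1 + q) + 1 := by omega
  rw [hpq, add_mul, one_mul] at hfin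
  omega
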